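/- With G the strict symmetric 2-group of dual integers and (F(a,b), F(a,b)_⊕) as above with b ≠ 0, the pair does NOT satisfy the monoidal functor associativity axiom (SF1): there exist objects for which the hexagon fails. Concretely, (SF1) for this pair is equivalent to b(x − x') = 0 for all integers x, x', which fails when b ≠ 0. -/

import Mathlib

open CategoryTheory

/-- Elements `x + y·ε` of the ring `ℤ[ε]/(ε²)` of dual integers, encoded as pairs. -/
def Dual : Type := ℤ × ℤ

instance : AddCommGroup Dual := inferInstanceAs (AddCommGroup (ℤ × ℤ))

/-- First component (`x` in `x + yε`). -/
def Dual.x (u : Dual) : ℤ := (show ℤ × ℤ from u).1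

/-- Second component (`y` in `x + yε`). -/
def Dual.y (u : Dual) : ℤ := (show ℤ × ℤ from u).2

/-- The groupoid of dual integers: morphisms `u ⟶ v` are pairs `(n, u)` with `n : ℤ`,
existing only when `u = v`; composition adds the integer components. -/
instance : Groupoid Dual where
  Hom u v := { _n : ℤ // u = v }
  id _ := ⟨0, rfl⟩
  comp f g := ⟨f.1 + g.1, f.2.trans g.2⟩
  id_comp _ := Subtype.ext (zero_add _)
  comp_id _ := Subtype.ext (add_zero _)
  assoc _ _ _ := Subtype.ext (add_assoc _ _ _)
  inv f := ⟨-f.1, f.2.symm⟩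
  inv_comp f := Subtype.ext (by simp)
  comp_inv f := Subtype.ext (by simp)

/-- The integer component of a morphism of `Dual`. -/
def homVal {u v : Dual} (f : u ⟶ v) : ℤ := (show { _n : ℤ // u = v } from f).1

/-- The underlying object equality of a morphism of `Dual`. -/
def homEq {u v : Dual} (f : u ⟶ v) : u = v := (show { _n : ℤ // u = v } from f).2

/-- Construct a morphism of `Dual` from an integer and an object equality. -/
def homMk {u v : Dual} (n : ℤ) (h : u = v) : u ⟶ v := show { _n : ℤ // u = v } from ⟨n, h⟩

/-- The (strict) tensor product of morphisms: componentwise addition. -/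
def tHom {u v w s : Dual} (f : u ⟶ v) (g : w ⟶ s) : u + w ⟶ v + s :=
  homMk (homVal f + homVal g) (by rw [homEq f, homEq g])

/-- Multiplication by `a + b·ε`: `(a+bε)·(x+yε) = ax + (ay+bx)ε`. -/
def rmul (a b : ℤ) (u : Dual) : Dual := show ℤ × ℤ from (a * u.x, a * u.y + b * u.x)

/-- Object part of the functor `F(a,b)`: multiplication by `a + b·ε`. -/
def Fobj (a b : ℤ) (u : Dual) : Dual := rmul a b u

/-- Morphism part of the functor `F(a,b)`: `(n, u) ↦ (a·n, (a+bε)·u)`. -/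
def Fmap (a b : ℤ) {u v : Dual} (f : u ⟶ v) : Fobj a b u ⟶ Fobj a b v :=
  homMk (a * homVal f) (by rw [homEq f])

lemma Fobj_add (a b : ℤ) (u v : Dual) : Fobj a b u + Fobj a b v = Fobj a b (u + v) := by
  show ((a * u.x, a * u.y + b * u.x) : ℤ × ℤ) + (a * v.x, a * v.y + b * v.x)
      = (a * (u + v).x, a * (u + v).y + b * (u + v).x)
  have hx : (u + v).x = u.x + v.x := rfl
  have hy : (u + v).y = u.y + v.y := rfl
  rw [Prod.ext_iff]
  constructor <;> simp [hx, hy] <;> ring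

/-- The monoidality morphisms of `F(a,b)`:
`F(a,b)_⊕(x+yε, x'+y'ε) = (b(x+x'), F(a,b)((x+yε)+(x'+y'ε)))`. -/
def Fm (a b : ℤ) (u v : Dual) : Fobj a b u + Fobj a b v ⟶ Fobj a b (u + v) :=
  homMk (b * (u.x + v.x)) (Fobj_add a b u v)

/-- The (identity-component) associo-commutator of the strict symmetric 2-group `Dual`. -/
def bDual (u v w s : Dual) : (u + v) + (w + s) ⟶ (u + w) + (v + s) :=
  homMk 0 (add_add_add_comm u v w s)

/-- The (identity-component) associator of the strict monoidal structure on `Dual`. -/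
def aDual (u v w : Dual) : (u + v) + w ⟶ u + (v + w) :=
  homMk 0 (add_assoc u v w)

/-- The (identity-component) left unitor of `Dual`. -/
def lDual (u : Dual) : 0 + u ⟶ u := homMk 0 (zero_add u)

/-- The (identity-component) right unitor of `Dual`. -/
def rDual (u : Dual) : u + 0 ⟶ u := homMk 0 (add_zero u)

/-- For `b ≠ 0` the pair `(F(a,b), F(a,b)_⊕)` does NOT satisfy the monoidal functor
associativity axiom (SF1); concretely, (SF1) for this pair is equivalent to
`b·(x − x') = 0` for all integers `x, x'`, which fails when `b ≠ 0`. -/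
theorem stmt15 (a b : ℤ) (hb : b ≠ 0) :
    ((∀ u v w : Dual,
        tHom (Fm a b u v) (𝟙 (Fobj a b w)) ≫ Fm a b (u + v) w ≫ Fmap a b (aDual u v w) =
          aDual (Fobj a b u) (Fobj a b v) (Fobj a b w) ≫
            tHom (𝟙 (Fobj a b u)) (Fm a b v w) ≫ Fm a b u (v + w)) ↔
      (∀ x x' : ℤ, b * (x - x') = 0)) ∧
    ¬ (∀ u v w : Dual,
        tHom (Fm a b u v) (𝟙 (Fobj a b w)) ≫ Fm a b (u + v) w ≫ Fmap a b (aDual u v w) =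
          aDual (Fobj a b u) (Fobj a b v) (Fobj a b w) ≫
            tHom (𝟙 (Fobj a b u)) (Fm a b v w) ≫ Fm a b u (v + w)) := by
  have key : ∀ u v w : Dual,
      (tHom (Fm a b u v) (𝟙 (Fobj a b w)) ≫ Fm a b (u + v) w ≫ Fmap a b (aDual u v w) =
          aDual (Fobj a b u) (Fobj a b v) (Fobj a b w) ≫
            tHom (𝟙 (Fobj a b u)) (Fm a b v w) ≫ Fm a b u (v + w)) ↔
        b * (u.x - w.x) = 0 := by
    intro u v w
    have hval : ∀ (p q : Dual) (f g : p ⟶ q),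
        f = g ↔ homVal f = homVal g := by
      intro p q f g
      exact ⟨fun h => by rw [h], fun h => Subtype.ext h⟩
    rw [hval]
    have hcomp : ∀ (p q r : Dual) (f : p ⟶ q) (g : q ⟶ r),
        homVal (f ≫ g) = homVal f + homVal g := fun _ _ _ _ _ => rfl
    have hid : ∀ p : Dual, homVal (𝟙 p) = 0 := fun _ => rfl
    have ht : ∀ (p q r s : Dual) (f : p ⟶ q) (g : r ⟶ s),
        homVal (tHom f g) = homVal f + homVal g := fun _ _ _ _ _ _ => rfl
    have huv : (u + v).x = u.x + v.x := rfl
    have hvw : (v + w).x = v.x + w.x := rfl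
    simp only [hcomp, hid, ht]
    show b * (u.x + v.x) + 0 + (b * ((u + v).x + w.x) + a * 0) =
        0 + (0 + b * (v.x + w.x) + b * (u.x + (v + w).x)) ↔ b * (u.x - w.x) = 0
    rw [huv, hvw]
    constructor <;> intro h <;> linarith
  constructor
  · constructor
    · intro h x x'
      have := (key (show ℤ × ℤ from (x, 0)) 0 (show ℤ × ℤ from (x', 0))).mp (h _ _ _)
      simpa [Dual.x] using this
    · intro h u v w
      exact (key u v w).mpr (h u.x w.x)
  · intro h
    have := (key (show ℤ × ℤ from (1, 0)) 0 0).mp (h _ _ _)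
    simp [Dual.x] at this
    exact hb (this.resolve_right (by show (1:ℤ) - 0 ≠ 0; norm_num))
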